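/- Let T be a finite tree, let N ⊆ V(T) be a set of vertices, and let (e_1,...,e_n) be an ordering of the edges of T. Define α(k) = 0 if both ends of e_k can be joined to nodes of N using only edges among e_1,...,e_{k-1}, and α(k) = 1 otherwise. Then the sum of α(k) over k = 1,...,n is independent of the ordering (e_1,...,e_n). -/

import Mathlib

open scoped Classical
open SimpleGraph Finset

/-- The subgraph spanned by the edges `σ e_i` with `i < k`. -/
noncomputable def prefixGraph {V : Type*} (T : SimpleGraph V) {n : ℕ}
    (σ : Fin n ≃ T.edgeSet) (k : Fin n) : SimpleGraph V :=
  SimpleGraph.fromEdgeSet {e | ∃ i : Fin n, i < k ∧ (σ i : Sym2 V) = e}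

/-- `∑ α(k)` for the edge ordering `σ`, where `α(k) = 0` if both ends of the
`k`-th edge can be joined to the set `N` using only earlier edges (length-0
paths allowed), and `α(k) = 1` otherwise. -/
noncomputable def alphaSum {V : Type*} [Fintype V] (T : SimpleGraph V)
    (N : Set V) {n : ℕ} (σ : Fin n ≃ T.edgeSet) : ℕ :=
  ∑ k : Fin n, if (∀ x ∈ (σ k : Sym2 V), ∃ y ∈ N,
      (prefixGraph T σ k).Reachable x y) then 0 else 1

namespace AlphaAux

variable {V : Type*}

/-- prefix graph with a natural-number index -/
noncomputable def pg (T : SimpleGraph V) {n : ℕ} (σ : Fin n ≃ T.edgeSet) (k : ℕ) :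
    SimpleGraph V :=
  SimpleGraph.fromEdgeSet {e | ∃ i : Fin n, (i : ℕ) < k ∧ (σ i : Sym2 V) = e}

lemma prefixGraph_eq_pg (T : SimpleGraph V) {n : ℕ} (σ : Fin n ≃ T.edgeSet) (k : Fin n) :
    prefixGraph T σ k = pg T σ (k : ℕ) := rfl

/-- number of connected components meeting `N` -/
noncomputable def cN (G : SimpleGraph V) (N : Set V) : ℕ :=
  (G.connectedComponentMk '' N).ncard

lemma reach_sup_edge {G : SimpleGraph V} {u v : V} (x y : V)
    (w : (G ⊔ SimpleGraph.fromEdgeSet {s(u, v)}).Walk x y) :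
    G.Reachable x y ∨ (G.Reachable x u ∧ G.Reachable v y) ∨
      (G.Reachable x v ∧ G.Reachable u y) := by
  induction w with
  | nil => exact Or.inl (Reachable.refl _)
  | @cons a b c h p ih =>
    rcases h with h | h
    · have hab : G.Reachable a b := h.reachable
      rcases ih with h1 | ⟨h1, h2⟩ | ⟨h1, h2⟩
      · exact Or.inl (hab.trans h1)
      · exact Or.inr (Or.inl ⟨hab.trans h1, h2⟩)
      · exact Or.inr (Or.inr ⟨hab.trans h1, h2⟩)
    · rw [SimpleGraph.fromEdgeSet_adj] at h
      obtain ⟨he, hab⟩ := h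
      rw [Set.mem_singleton_iff, Sym2.eq_iff] at he
      rcases he with ⟨rfl, rfl⟩ | ⟨rfl, rfl⟩
      · rcases ih with h1 | ⟨h1, h2⟩ | ⟨h1, h2⟩
        · exact Or.inr (Or.inl ⟨Reachable.refl _, h1⟩)
        · exact Or.inr (Or.inl ⟨Reachable.refl _, h2⟩)
        · exact Or.inl h2
      · rcases ih with h1 | ⟨h1, h2⟩ | ⟨h1, h2⟩
        · exact Or.inr (Or.inr ⟨Reachable.refl _, h1⟩)
        · exact Or.inl h2
        · exact Or.inr (Or.inr ⟨Reachable.refl _, h2⟩)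

lemma reach_sup_edge_iff {G : SimpleGraph V} {u v : V} (huv : u ≠ v) (x y : V) :
    (G ⊔ SimpleGraph.fromEdgeSet {s(u, v)}).Reachable x y ↔
      G.Reachable x y ∨ (G.Reachable x u ∧ G.Reachable v y) ∨
        (G.Reachable x v ∧ G.Reachable u y) := by
  constructor
  · rintro ⟨w⟩; exact reach_sup_edge x y w
  · have hle : G ≤ G ⊔ SimpleGraph.fromEdgeSet {s(u, v)} := le_sup_left
    have hadj : (G ⊔ SimpleGraph.fromEdgeSet {s(u, v)}).Adj u v := by
      right
      rw [SimpleGraph.fromEdgeSet_adj]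
      exact ⟨rfl, huv⟩
    rintro (h | ⟨h1, h2⟩ | ⟨h1, h2⟩)
    · exact h.mono hle
    · exact ((h1.mono hle).trans hadj.reachable).trans (h2.mono hle)
    · exact ((h1.mono hle).trans hadj.reachable.symm).trans (h2.mono hle)

/-- the key counting lemma: adding an edge between two distinct components. -/
lemma cN_step [Fintype V] {G H : SimpleGraph V} (hle : G ≤ H) {u v : V}
    (huv : H.Adj u v) (hnr : ¬ G.Reachable u v)
    (hdec : ∀ x y, H.Reachable x y ↔ G.Reachable x y ∨
      (G.Reachable x u ∧ G.Reachable v y) ∨ (G.Reachable x v ∧ G.Reachable u y))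
    (N : Set V) :
    cN H N + (if (∃ a ∈ N, G.Reachable u a) ∧ (∃ a ∈ N, G.Reachable v a)
      then 1 else 0) = cN G N := by
  classical
  set φ : G.ConnectedComponent → H.ConnectedComponent :=
    SimpleGraph.ConnectedComponent.map (SimpleGraph.Hom.ofLE hle) with hφ
  have hmk : ∀ x : V, H.connectedComponentMk x = φ (G.connectedComponentMk x) := by
    intro x; rfl
  have himg : H.connectedComponentMk '' N = φ '' (G.connectedComponentMk '' N) := by
    rw [Set.image_image]
    exact Set.image_congr (fun x _ => hmk x)
  -- φ on mk's detects H-reachability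
  have hφeq : ∀ x y : V, φ (G.connectedComponentMk x) = φ (G.connectedComponentMk y) ↔
      H.Reachable x y := by
    intro x y
    rw [← hmk, ← hmk, SimpleGraph.ConnectedComponent.eq]
  by_cases hcase : (∃ a ∈ N, G.Reachable u a) ∧ (∃ a ∈ N, G.Reachable v a)
  · obtain ⟨⟨a, haN, hua⟩, ⟨b, hbN, hvb⟩⟩ := hcase
    rw [if_pos ⟨⟨a, haN, hua⟩, ⟨b, hbN, hvb⟩⟩]
    have hab : G.connectedComponentMk a ≠ G.connectedComponentMk b := by
      intro h
      rw [SimpleGraph.ConnectedComponent.eq] at h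
      exact hnr ((hua.trans h).trans hvb.symm)
    have hbmem : G.connectedComponentMk b ∈ G.connectedComponentMk '' N :=
      ⟨b, hbN, rfl⟩
    -- image under φ ignores the component of b
    have himg2 : φ '' (G.connectedComponentMk '' N) =
        φ '' ((G.connectedComponentMk '' N) \ {G.connectedComponentMk b}) := by
      apply Set.Subset.antisymm
      · rintro _ ⟨C, ⟨c, hcN, rfl⟩, rfl⟩
        by_cases hc : G.connectedComponentMk c = G.connectedComponentMk b
        · refine ⟨G.connectedComponentMk a, ⟨⟨a, haN, rfl⟩, hab⟩, ?_⟩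
          rw [hφeq]
          have hcb : G.Reachable c b := SimpleGraph.ConnectedComponent.eq.1 hc
          exact (hdec a c).2 (Or.inr (Or.inl ⟨hua.symm, hvb.trans hcb.symm⟩))
        · exact ⟨G.connectedComponentMk c, ⟨⟨c, hcN, rfl⟩, hc⟩, rfl⟩
      · exact Set.image_mono Set.diff_subset
    have hinj : Set.InjOn φ ((G.connectedComponentMk '' N) \ {G.connectedComponentMk b}) := by
      rintro C ⟨⟨c, hcN, rfl⟩, hc⟩ D ⟨⟨d, hdN, rfl⟩, hd⟩ hCD
      rw [hφeq] at hCD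
      rw [hdec] at hCD
      rcases hCD with h | ⟨h1, h2⟩ | ⟨h1, h2⟩
      · exact SimpleGraph.ConnectedComponent.sound h
      · exact absurd (SimpleGraph.ConnectedComponent.sound (h2.symm.trans hvb))
          (by simpa using hd)
      · exact absurd (SimpleGraph.ConnectedComponent.sound (h1.trans hvb))
          (by simpa using hc)
    rw [cN, cN, himg, himg2, Set.ncard_image_of_injOn hinj,
      Set.ncard_diff_singleton_add_one hbmem (Set.toFinite _)]
  · rw [if_neg hcase, add_zero]
    have hinj : Set.InjOn φ (G.connectedComponentMk '' N) := by
      rintro C ⟨c, hcN, rfl⟩ D ⟨d, hdN, rfl⟩ hCD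
      rw [hφeq, hdec] at hCD
      rcases hCD with h | ⟨h1, h2⟩ | ⟨h1, h2⟩
      · exact SimpleGraph.ConnectedComponent.sound h
      · exact absurd ⟨⟨c, hcN, h1.symm⟩, ⟨d, hdN, h2⟩⟩ hcase
      · exact absurd ⟨⟨d, hdN, h2⟩, ⟨c, hcN, h1.symm⟩⟩ hcase
    rw [cN, cN, himg, Set.ncard_image_of_injOn hinj]

end AlphaAux

open AlphaAux

/-- Let `T` be a finite tree, `N` a set of vertices of `T`, and
`(e_1, …, e_n)` an ordering of the edges of `T`.  With `α(k) = 0` iff both ends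
of `e_k` can be joined to `N` by edges among `e_1, …, e_{k-1}` only, the sum
`∑ α(k)` is independent of the chosen ordering. -/
theorem alphaSum_independent_of_ordering {V : Type*} [Fintype V]
    (T : SimpleGraph V) (hT : T.IsTree) (N : Set V)
    (n : ℕ) (σ τ : Fin n ≃ T.edgeSet) :
    alphaSum T N σ = alphaSum T N τ := by
  classical
  -- main invariant, for any ordering
  have main : ∀ ρ : Fin n ≃ T.edgeSet,
      alphaSum T N ρ + cN (pg T ρ 0) N = n + cN (pg T ρ n) N := by
    intro ρ
    -- partial sums
    have key : ∀ m : ℕ, m ≤ n →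
        (∑ k ∈ Finset.univ.filter (fun k : Fin n => (k : ℕ) < m),
          if (∀ x ∈ (ρ k : Sym2 V), ∃ y ∈ N,
            (prefixGraph T ρ k).Reachable x y) then 0 else 1)
          + cN (pg T ρ 0) N = m + cN (pg T ρ m) N := by
      intro m hm
      induction m with
      | zero => simp
      | succ m ih =>
        have hm' : m ≤ n := Nat.le_of_succ_le hm
        have hmn : m < n := hm
        set k : Fin n := ⟨m, hmn⟩ with hk
        -- split the filter
        have hfilter : Finset.univ.filter (fun i : Fin n => (i : ℕ) < m + 1) =
            insert k (Finset.univ.filter (fun i : Fin n => (i : ℕ) < m)) := by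
          ext i
          simp only [Finset.mem_filter, Finset.mem_univ, true_and, Finset.mem_insert]
          constructor
          · intro hi
            rcases Nat.lt_succ_iff_lt_or_eq.1 hi with hi | hi
            · exact Or.inr hi
            · exact Or.inl (Fin.ext hi)
          · rintro (rfl | hi)
            · exact Nat.lt_succ_self m
            · exact Nat.lt_succ_of_lt hi
        have hknot : k ∉ Finset.univ.filter (fun i : Fin n => (i : ℕ) < m) := by
          simp [hk]
        -- endpoints of the m-th edge
        obtain ⟨u, v, hk2⟩ : ∃ u v, (ρ k : Sym2 V) = s(u, v) :=
          Sym2.inductionOn (ρ k : Sym2 V) (fun u v => ⟨u, v, rfl⟩)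
        have he : s(u, v) ∈ T.edgeSet := hk2 ▸ (ρ k).2
        have hadjT : T.Adj u v := T.mem_edgeSet.1 he
        have huv : u ≠ v := hadjT.ne
        -- properties of the prefix graphs
        have hGle : pg T ρ m ≤ T := by
          apply le_trans (SimpleGraph.fromEdgeSet_mono ?_)
          · rw [SimpleGraph.fromEdgeSet_edgeSet]
          · rintro e' ⟨i, _, rfl⟩
            exact (ρ i).2
        have hnotmem : (s(u, v) : Sym2 V) ∉ {e | ∃ i : Fin n, (i : ℕ) < m ∧ (ρ i : Sym2 V) = e} := by
          rintro ⟨i, hi, hie⟩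
          have : ρ i = ρ k := Subtype.ext (by rw [hie, hk2])
          have := ρ.injective this
          rw [this] at hi
          exact Nat.lt_irrefl m hi
        -- u, v are not reachable in pg T ρ m
        have hnr : ¬ (pg T ρ m).Reachable u v := by
          intro hr
          have hbridge : T.IsBridge s(u, v) :=
            (SimpleGraph.isAcyclic_iff_forall_adj_isBridge.1 hT.IsAcyclic) hadjT
          rw [SimpleGraph.isBridge_iff] at hbridge
          apply hbridge
          refine hr.mono ?_
          intro a b hab
          rw [SimpleGraph.deleteEdges, SimpleGraph.sdiff_adj]
          refine ⟨hGle hab, ?_⟩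
          rw [SimpleGraph.fromEdgeSet_adj]
          rintro ⟨hmem, -⟩
          have hab' : s(a, b) ∈ {e | ∃ i : Fin n, (i : ℕ) < m ∧ (ρ i : Sym2 V) = e} := by
            have := hab
            rw [pg, SimpleGraph.fromEdgeSet_adj] at this
            exact this.1
          exact hnotmem (Set.mem_singleton_iff.1 hmem ▸ hab')
        -- pg (m+1) = pg m ⊔ edge
        have hsup : pg T ρ (m + 1) = pg T ρ m ⊔ SimpleGraph.fromEdgeSet {s(u, v)} := by
          rw [pg, pg, ← SimpleGraph.fromEdgeSet_union]
          congr 1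
          ext e'
          simp only [Set.mem_setOf_eq, Set.mem_union, Set.mem_singleton_iff]
          constructor
          · rintro ⟨i, hi, rfl⟩
            rcases Nat.lt_succ_iff_lt_or_eq.1 hi with hi | hi
            · exact Or.inl ⟨i, hi, rfl⟩
            · have : i = k := Fin.ext hi
              subst this
              exact Or.inr hk2
          · rintro (⟨i, hi, rfl⟩ | rfl)
            · exact ⟨i, Nat.lt_succ_of_lt hi, rfl⟩
            · exact ⟨k, Nat.lt_succ_self m, hk2⟩
        have hle2 : pg T ρ m ≤ pg T ρ (m + 1) := by rw [hsup]; exact le_sup_left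
        have hadjH : (pg T ρ (m + 1)).Adj u v := by
          rw [hsup]
          right
          rw [SimpleGraph.fromEdgeSet_adj]
          exact ⟨rfl, huv⟩
        have hdec : ∀ x y, (pg T ρ (m + 1)).Reachable x y ↔ (pg T ρ m).Reachable x y ∨
            ((pg T ρ m).Reachable x u ∧ (pg T ρ m).Reachable v y) ∨
            ((pg T ρ m).Reachable x v ∧ (pg T ρ m).Reachable u y) := by
          intro x y
          rw [hsup]
          exact reach_sup_edge_iff huv x y
        have hstep := cN_step hle2 hadjH hnr hdec N
        -- identify α(k) with the if in cN_step
        have hcond : (∀ x ∈ (ρ k : Sym2 V), ∃ y ∈ N,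
            (prefixGraph T ρ k).Reachable x y) ↔
            ((∃ a ∈ N, (pg T ρ m).Reachable u a) ∧ (∃ a ∈ N, (pg T ρ m).Reachable v a)) := by
          rw [hk2, prefixGraph_eq_pg]
          constructor
          · intro h
            exact ⟨h u (Sym2.mem_mk_left u v), h v (Sym2.mem_mk_right u v)⟩
          · rintro ⟨h1, h2⟩ x hx
            rcases Sym2.mem_iff.1 hx with rfl | rfl
            · exact h1
            · exact h2
        rw [hfilter, Finset.sum_insert hknot]
        -- combine
        have ihm := ih hm'
        by_cases hc : (∃ a ∈ N, (pg T ρ m).Reachable u a) ∧ (∃ a ∈ N, (pg T ρ m).Reachable v a)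
        · rw [if_pos (hcond.2 hc), zero_add, ihm]
          rw [if_pos hc] at hstep
          omega
        · rw [if_neg (fun h => hc (hcond.1 h))]
          rw [if_neg hc, add_zero] at hstep
          omega
    have := key n (le_refl n)
    have hall : Finset.univ.filter (fun k : Fin n => (k : ℕ) < n) = Finset.univ := by
      ext i; simp [i.isLt]
    rw [hall] at this
    simpa [alphaSum] using this
  -- pg at 0 and n don't depend on the ordering
  have h0 : ∀ ρ : Fin n ≃ T.edgeSet, pg T ρ 0 = ⊥ := by
    intro ρ
    rw [pg]
    convert SimpleGraph.fromEdgeSet_empty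
    ext e
    simp
  have hn : ∀ ρ : Fin n ≃ T.edgeSet, pg T ρ n = T := by
    intro ρ
    rw [pg]
    have : {e | ∃ i : Fin n, (i : ℕ) < n ∧ (ρ i : Sym2 V) = e} = T.edgeSet := by
      ext e
      constructor
      · rintro ⟨i, _, rfl⟩
        exact (ρ i).2
      · intro he
        exact ⟨ρ.symm ⟨e, he⟩, (ρ.symm ⟨e, he⟩).isLt, by simp⟩
    rw [this, SimpleGraph.fromEdgeSet_edgeSet]
  have hσ := main σ
  have hτ := main τ
  rw [h0, hn] at hσ hτ
  omega
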